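/- (Robbins.) A connected undirected graph G admits a strongly connected orientation if and only if G has no bridge. -/

import Mathlib

open scoped Classical ENNReal

universe u

/-- A mixed multigraph: a type `E` of edges, an endpoint map (tail, head) and a
predicate recording which edges are directed. An undirected edge may be
traversed in both directions; a directed edge only from tail to head. -/
structure MixedMultigraph (V : Type u) : Type (u + 1) where
  E : Type u
  ends : E → V × V
  directed : E → Prop

namespace MixedMultigraph

variable {V : Type u}

/-- Edge `e` may be traversed from `x` to `y`. -/
def Traverses (G : MixedMultigraph V) (e : G.E) (x y : V) : Prop :=
  G.ends e = (x, y) ∨ (¬ G.directed e ∧ G.ends e = (y, x))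

/-- Walks in a mixed multigraph: consecutive vertices are joined by an
undirected edge or by a directed edge traversed in its direction. -/
inductive Walk (G : MixedMultigraph V) : V → V → Type u
  | nil (v : V) : Walk G v v
  | cons {x y z : V} (e : G.E) (h : G.Traverses e x y) (w : Walk G y z) : Walk G x z

namespace Walk

variable {G : MixedMultigraph V}

/-- The number of edges of a walk. -/
def length : ∀ {x y : V}, G.Walk x y → ℕ
  | _, _, nil _ => 0
  | _, _, cons _ _ w => w.length + 1

/-- The list of edges of a walk. -/
def edges : ∀ {x y : V}, G.Walk x y → List G.E
  | _, _, nil _ => []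
  | _, _, cons e _ w => e :: w.edges

/-- The list of vertices visited by a walk (both endpoints included). -/
def support : ∀ {x y : V}, G.Walk x y → List V
  | _, _, nil v => [v]
  | x, _, cons _ _ w => x :: w.support

end Walk

/-- The distance from `x` to `y`: the minimum number of edges of a walk from
`x` to `y` (`⊤` if there is none). -/
noncomputable def edist (G : MixedMultigraph V) (x y : V) : ℕ∞ :=
  sInf {n : ℕ∞ | ∃ w : G.Walk x y, (w.length : ℕ∞) = n}

/-- The eccentricity of a vertex `u`. -/
noncomputable def ecc (G : MixedMultigraph V) (u : V) : ℕ∞ :=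
  ⨆ v, max (G.edist u v) (G.edist v u)

/-- The radius of `G`. -/
noncomputable def radius (G : MixedMultigraph V) : ℕ∞ := ⨅ u, G.ecc u

/-- The diameter of `G`. -/
noncomputable def diam (G : MixedMultigraph V) : ℕ∞ := ⨆ u, G.ecc u

/-- `G` is strongly connected: every vertex can reach every other by a walk. -/
def StronglyConnected (G : MixedMultigraph V) : Prop :=
  ∀ x y : V, Nonempty (G.Walk x y)

/-- The underlying undirected multigraph: forget all directions. -/
def symmetrize (G : MixedMultigraph V) : MixedMultigraph V :=
  ⟨G.E, G.ends, fun _ => False⟩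

/-- Delete the edge `e`. -/
def deleteEdge (G : MixedMultigraph V) (e : G.E) : MixedMultigraph V :=
  ⟨{e' : G.E // e' ≠ e}, fun e' => G.ends e'.1, fun e' => G.directed e'.1⟩

/-- The underlying undirected multigraph of `G` is connected. -/
def Conn (G : MixedMultigraph V) : Prop := G.symmetrize.StronglyConnected

/-- A bridge: an undirected edge whose removal disconnects the underlying
undirected multigraph. -/
def IsBridge (G : MixedMultigraph V) (e : G.E) : Prop :=
  ¬ G.directed e ∧ ¬ (G.deleteEdge e).Conn

/-- `G` has no bridges. -/
def Bridgeless (G : MixedMultigraph V) : Prop := ∀ e, ¬ G.IsBridge e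

/-- `G` is 2-edge-connected: connected and without bridges. -/
def TwoEdgeConnected (G : MixedMultigraph V) : Prop := G.Conn ∧ G.Bridgeless

/-- The neighbours of `u`: all in-neighbours, out-neighbours and undirected
neighbours. -/
def neighborSet (G : MixedMultigraph V) (u : V) : Set V :=
  {v | ∃ e : G.E, G.ends e = (u, v) ∨ G.ends e = (v, u)}

/-- The closed neighbourhood `N[u]`. -/
def closedNeighborSet (G : MixedMultigraph V) (u : V) : Set V :=
  insert u (G.neighborSet u)

/-- An orientation of `G`: each undirected edge receives exactly one direction
(`flip e = true` means the stored endpoint pair of `e` is reversed); directed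
edges keep their direction. -/
structure Orientation (G : MixedMultigraph V) where
  flip : G.E → Bool
  flip_dir : ∀ e, G.directed e → flip e = false

/-- The (fully directed) mixed multigraph produced by an orientation. -/
def Orientation.graph {G : MixedMultigraph V} (σ : G.Orientation) :
    MixedMultigraph V :=
  ⟨G.E, fun e => if σ.flip e then (G.ends e).swap else G.ends e, fun _ => True⟩

/-- A cycle: a closed walk of positive length with no repeated edges and no
repeated vertices except the common start/end vertex. -/
def IsCycle (G : MixedMultigraph V) {a : V} (w : G.Walk a a) : Prop :=
  0 < w.length ∧ w.edges.Nodup ∧ w.support.tail.Nodup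

/-- `e` is an edge between `u` and `v`. -/
def EdgeBetween (G : MixedMultigraph V) (e : G.E) (u v : V) : Prop :=
  G.ends e = (u, v) ∨ G.ends e = (v, u)

/-- The length of a shortest cycle containing the edge `e`. -/
noncomputable def girthThrough (G : MixedMultigraph V) (e : G.E) : ℕ∞ :=
  sInf {n : ℕ∞ | ∃ (a : V) (w : G.Walk a a),
    G.IsCycle w ∧ e ∈ w.edges ∧ (w.length : ℕ∞) = n}

/-- `l(v)`: the length of a shortest cycle containing an edge between `u` and
`v`. -/
noncomputable def cycLen (G : MixedMultigraph V) (u v : V) : ℕ∞ :=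
  sInf {n : ℕ∞ | ∃ (a : V) (w : G.Walk a a) (e : G.E),
    G.IsCycle w ∧ e ∈ w.edges ∧ G.EdgeBetween e u v ∧ (w.length : ℕ∞) = n}

/-- The parameter `s = ∑_{v ∈ N(u)} l(v)`. -/
noncomputable def sParam (G : MixedMultigraph V) (u : V) : ℕ∞ :=
  ∑ᶠ v ∈ G.neighborSet u, G.cycLen u v

/-- Orient the single edge `e₀`: give it the (tail, head) pair `d` and make it
directed, leaving all other edges unchanged. -/
noncomputable def orientOne (G : MixedMultigraph V) (e₀ : G.E) (d : V × V) :
    MixedMultigraph V :=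
  ⟨G.E, fun e => if e = e₀ then d else G.ends e, fun e => e = e₀ ∨ G.directed e⟩

/-- A subgraph of `G`. -/
structure Subgraph (G : MixedMultigraph V) where
  verts : Set V
  edges : Set G.E
  fst_mem : ∀ e ∈ edges, (G.ends e).1 ∈ verts
  snd_mem : ∀ e ∈ edges, (G.ends e).2 ∈ verts

/-- A subgraph, regarded as a mixed multigraph on its own vertex set. -/
def Subgraph.toGraph {G : MixedMultigraph V} (H : G.Subgraph) :
    MixedMultigraph H.verts :=
  ⟨H.edges,
   fun e => (⟨(G.ends e.1).1, H.fst_mem e.1 e.2⟩, ⟨(G.ends e.1).2, H.snd_mem e.1 e.2⟩),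
   fun e => G.directed e.1⟩

end MixedMultigraph

/-! Undirected (simple) graphs and their orientations. -/

/-- The eccentricity of a vertex of an undirected graph. -/
noncomputable def sgEcc {V : Type u} (G : SimpleGraph V) (u : V) : ℕ∞ :=
  ⨆ v, G.edist u v

/-- The radius of an undirected graph. -/
noncomputable def sgRadius {V : Type u} (G : SimpleGraph V) : ℕ∞ :=
  ⨅ u, sgEcc G u

/-- The diameter of an undirected graph. -/
noncomputable def sgDiam {V : Type u} (G : SimpleGraph V) : ℕ∞ :=
  ⨆ u, sgEcc G u

/-- An orientation of a simple graph `G`: exactly one of the two directions is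
chosen for each edge of `G`. -/
structure SGOrientation {V : Type u} (G : SimpleGraph V) where
  adj : V → V → Prop
  adj_sub : ∀ ⦃x y : V⦄, adj x y → G.Adj x y
  exactly_one : ∀ ⦃x y : V⦄, G.Adj x y → (adj x y ↔ ¬ adj y x)

/-- The digraph produced by an orientation, as a (fully directed) mixed
multigraph, so that directed distances, eccentricities, radius and diameter
are available. -/
def SGOrientation.toMixed {V : Type u} {G : SimpleGraph V} (o : SGOrientation G) :
    MixedMultigraph V :=
  ⟨{p : V × V // o.adj p.1 p.2}, Subtype.val, fun _ => True⟩

/-! Auxiliary material for the proof of Robbins' theorem. -/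

namespace RobbinsAux

open MixedMultigraph

variable {V : Type u}

/-- Membership of the start vertex in the support of a mixed walk. -/
theorem start_mem_support {G : MixedMultigraph V} :
    ∀ {x y : V} (w : G.Walk x y), x ∈ w.support
  | _, _, .nil _ => by simp [MixedMultigraph.Walk.support]
  | _, _, .cons _ _ _ => by simp [MixedMultigraph.Walk.support]

/-- Concatenation of mixed walks. -/
def wappend {G : MixedMultigraph V} :
    ∀ {x y z : V}, G.Walk x y → G.Walk y z → G.Walk x z
  | _, _, _, .nil _, w2 => w2
  | _, _, _, .cons e h w, w2 => .cons e h (wappend w w2)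

theorem mem_support_wappend {G : MixedMultigraph V} :
    ∀ {x y z v : V} (w1 : G.Walk x y) (w2 : G.Walk y z),
      v ∈ (wappend w1 w2).support → v ∈ w1.support ∨ v ∈ w2.support
  | _, _, _, _, .nil _, w2 => fun h => Or.inr h
  | x, _, _, v, .cons e he w, w2 => by
    intro h
    simp only [wappend, MixedMultigraph.Walk.support, List.mem_cons] at h ⊢
    rcases h with rfl | h
    · exact Or.inl (Or.inl rfl)
    · rcases mem_support_wappend w w2 h with h | h
      · exact Or.inl (Or.inr h)
      · exact Or.inr h

variable {G : SimpleGraph V}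

/-- From a traversal in the digraph of an orientation, extract the arc. -/
theorem adj_of_traverses {o : SGOrientation G} {e : o.toMixed.E} {x y : V}
    (h : o.toMixed.Traverses e x y) : o.adj x y := by
  rcases h with h | h
  · have := e.2
    have hval : (e.1 : V × V) = (x, y) := h
    rw [hval] at this
    exact this
  · exact absurd trivial h.1

/-- A single arc, as a walk in the digraph of an orientation. -/
def stepWalk {o : SGOrientation G} {x y : V} (h : o.adj x y) : o.toMixed.Walk x y :=
  .cons (⟨(x, y), h⟩ : o.toMixed.E) (Or.inl rfl) (.nil y)

theorem mem_support_stepWalk {o : SGOrientation G} {x y v : V} (h : o.adj x y)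
    (hv : v ∈ (stepWalk h).support) : v = x ∨ v = y := by
  simp only [stepWalk, MixedMultigraph.Walk.support, List.mem_cons,
    List.mem_singleton, List.not_mem_nil, or_false] at hv
  tauto

/-- If a directed walk starts outside `P` and ends inside, some arc crosses. -/
theorem exists_crossing_arc {o : SGOrientation G} (P : V → Prop) :
    ∀ {x y : V} (_ : o.toMixed.Walk x y), ¬ P x → P y →
      ∃ p q, ¬ P p ∧ P q ∧ o.adj p q
  | _, _, .nil _ => fun hx hy => absurd hy hx
  | x, y, .cons e he w => by
    intro hx hy
    rename_i m
    have hadj : o.adj x m := adj_of_traverses he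
    by_cases hm : P m
    · exact ⟨x, m, hx, hm, hadj⟩
    · exact exists_crossing_arc P w hm hy

/-- Turn an undirected walk whose darts are all arcs of `o` into a directed walk. -/
theorem walk_of_darts {G' : SimpleGraph V} {o : SGOrientation G} :
    ∀ {x y : V} (r : G'.Walk x y),
      (∀ d ∈ r.darts, o.adj d.toProd.1 d.toProd.2) →
      ∃ w : o.toMixed.Walk x y, ∀ v ∈ w.support, v ∈ r.support
  | _, _, .nil => fun _ => ⟨.nil _, by
      intro v hv
      simp only [MixedMultigraph.Walk.support, List.mem_singleton] at hv
      simp [hv]⟩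
  | x, y, .cons h r => by
    intro hd
    rename_i m
    have h1 : o.adj x m := hd ⟨(x, m), h⟩ (by simp [SimpleGraph.Walk.darts_cons])
    obtain ⟨w, hw⟩ := walk_of_darts r (fun d hdm => hd d (by simp [SimpleGraph.Walk.darts_cons, hdm]))
    refine ⟨.cons (⟨(x, m), h1⟩ : o.toMixed.E) (Or.inl rfl) w, ?_⟩
    intro v hv
    simp only [MixedMultigraph.Walk.support, List.mem_cons] at hv
    rcases hv with rfl | hv
    · simp [SimpleGraph.Walk.support_cons]
    · simp [SimpleGraph.Walk.support_cons, hw v hv]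

/-- Transfer a directed walk between orientations agreeing on arcs inside `S`. -/
theorem transfer_walk {o o' : SGOrientation G} (S : Set V)
    (hS : ∀ u v, u ∈ S → v ∈ S → o.adj u v → o'.adj u v) :
    ∀ {x y : V} (w : o.toMixed.Walk x y), (∀ v ∈ w.support, v ∈ S) →
      ∃ w' : o'.toMixed.Walk x y, ∀ v ∈ w'.support, v ∈ S
  | _, _, .nil v => fun hsup => ⟨.nil v, hsup⟩
  | x, y, .cons e he w => by
    intro hsup
    rename_i m
    have hx : x ∈ S := hsup x (by simp [MixedMultigraph.Walk.support])
    have hm : m ∈ S := hsup m (by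
      simp only [MixedMultigraph.Walk.support, List.mem_cons]
      exact Or.inr (start_mem_support w))
    have h1 : o'.adj x m := hS x m hx hm (adj_of_traverses he)
    obtain ⟨w', hw'⟩ := transfer_walk S hS w (fun v hv => hsup v (by
      simp only [MixedMultigraph.Walk.support, List.mem_cons]; exact Or.inr hv))
    refine ⟨.cons (⟨(x, m), h1⟩ : o'.toMixed.E) (Or.inl rfl) w', ?_⟩
    intro v hv
    simp only [MixedMultigraph.Walk.support, List.mem_cons] at hv
    rcases hv with rfl | hv
    · exact hx
    · exact hw' v hv

/-- The first coordinate of a dart of a walk is a non-final support vertex. -/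
theorem dart_fst_mem_dropLast {G' : SimpleGraph V} :
    ∀ {x y : V} (r : G'.Walk x y), ∀ d ∈ r.darts, d.toProd.1 ∈ r.support.dropLast
  | _, _, .nil => by simp [SimpleGraph.Walk.darts_nil]
  | x, y, .cons h r => by
    intro d hd
    rename_i m
    rw [SimpleGraph.Walk.support_cons]
    have hne : r.support ≠ [] := r.support_ne_nil
    rw [List.dropLast_cons_of_ne_nil hne]
    simp only [SimpleGraph.Walk.darts_cons, List.mem_cons] at hd
    rcases hd with rfl | hd
    · exact List.mem_cons_self
    · exact List.mem_cons_of_mem _ (dart_fst_mem_dropLast r d hd)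

/-- Cut a walk at the first vertex belonging to `S`. -/
theorem exists_first_entry {G' : SimpleGraph V} (S : Set V) :
    ∀ {x y : V} (p : G'.Walk x y), p.support.Nodup → y ∈ S →
      ∃ c, c ∈ S ∧ ∃ q : G'.Walk x c, q.support.Nodup ∧
        (∀ v ∈ q.support.dropLast, v ∉ S) ∧ q.support ⊆ p.support
  | _, _, .nil => fun _ hy => ⟨_, hy, .nil, by simp, by simp, by simp⟩
  | x, y, .cons h p => by
    intro hnd hy
    rename_i m
    by_cases hx : x ∈ S
    · exact ⟨x, hx, .nil, by simp, by simp, by simp [SimpleGraph.Walk.support_cons]⟩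
    · rw [SimpleGraph.Walk.support_cons, List.nodup_cons] at hnd
      obtain ⟨c, hc, q, hq1, hq2, hq3⟩ := exists_first_entry S p hnd.2 hy
      refine ⟨c, hc, .cons h q, ?_, ?_, ?_⟩
      · rw [SimpleGraph.Walk.support_cons, List.nodup_cons]
        exact ⟨fun hmem => hnd.1 (hq3 hmem), hq1⟩
      · intro v hv
        rw [SimpleGraph.Walk.support_cons,
          List.dropLast_cons_of_ne_nil q.support_ne_nil] at hv
        rcases List.mem_cons.1 hv with rfl | hv
        · exact hx
        · exact hq2 v hv
      · rw [SimpleGraph.Walk.support_cons, SimpleGraph.Walk.support_cons]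
        exact List.cons_subset_cons _ hq3

/-- In a connected graph, an edge crosses out of any proper nonempty set. -/
theorem exists_crossing_adj (S : Set V) :
    ∀ {x y : V} (_ : G.Walk x y), x ∉ S → y ∈ S →
      ∃ a b, a ∉ S ∧ b ∈ S ∧ G.Adj a b
  | _, _, .nil => fun hx hy => absurd hy hx
  | x, y, .cons h p => by
    intro hx hy
    rename_i m
    by_cases hm : m ∈ S
    · exact ⟨x, m, hx, hm, h⟩
    · exact exists_crossing_adj S p hm hy

/-- The invariant: every two vertices of `S` are joined by a directed walk
staying inside `S`. -/
def OKo (o : SGOrientation G) (S : Set V) : Prop :=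
  ∀ x ∈ S, ∀ y ∈ S, ∃ w : o.toMixed.Walk x y, ∀ v ∈ w.support, v ∈ S

set_option maxHeartbeats 1000000 in
/-- The ear-extension step. -/
theorem step_lemma {V : Type} {G : SimpleGraph V}
    (hbl : ∀ e ∈ G.edgeSet, ¬ G.IsBridge e)
    {o : SGOrientation G} {S : Set V} (hok : OKo o S)
    {a b : V} (ha : a ∉ S) (hb : b ∈ S) (hab : G.Adj a b) :
    ∃ (o' : SGOrientation G) (L : List V),
      OKo o' (S ∪ {v | v ∈ L}) ∧ a ∈ L := by
  classical
  set G' : SimpleGraph V := G \ SimpleGraph.fromEdgeSet {s(a, b)} with hG'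
  have hG'adj : ∀ u v, G'.Adj u v ↔ G.Adj u v ∧ s(u, v) ≠ s(a, b) := by
    intro u v
    rw [hG', SimpleGraph.sdiff_adj, SimpleGraph.fromEdgeSet_adj]
    constructor
    · rintro ⟨h1, h2⟩
      refine ⟨h1, fun he => h2 ⟨by simp [he], h1.ne⟩⟩
    · rintro ⟨h1, h2⟩
      exact ⟨h1, fun hc => h2 (by simpa using hc.1)⟩
  have hreach : G'.Reachable a b := by
    have := hbl s(a, b) (G.mem_edgeSet.mpr hab)
    rw [SimpleGraph.isBridge_iff] at this
    push_neg at this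
    exact this
  obtain ⟨p0⟩ := hreach
  set p : G'.Walk a b := (p0.toPath : G'.Walk a b) with hp
  have hpnd : p.support.Nodup := p0.toPath.2.support_nodup
  obtain ⟨c, hc, q, hqnd, hqint, -⟩ := exists_first_entry S p hpnd hb
  -- forward arcs of the ear
  set Fwd : V → V → Prop :=
    fun x y => (x = b ∧ y = a) ∨ ∃ d ∈ q.darts, d.toProd = (x, y) with hFwd
  have hG'le : ∀ {u v}, G'.Adj u v → G.Adj u v := fun h => ((hG'adj _ _).1 h).1
  have hdartG' : ∀ d ∈ q.darts, G'.Adj d.toProd.1 d.toProd.2 := fun d _ => d.adj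
  have hnoconf : ∀ x y, G.Adj x y → Fwd x y → Fwd y x → False := by
    intro x y hxy h1 h2
    rcases h1 with ⟨hx1, hy1⟩ | ⟨d1, hd1, hd1'⟩
    · rcases h2 with ⟨hy2, hx2⟩ | ⟨d2, hd2, hd2'⟩
      · -- hx1 : x = b, hy1 : y = a, hy2 : y = b, hx2 : x = a
        exact hab.ne (hx2.symm.trans hx1)
      · have hG2 := (hG'adj d2.toProd.1 d2.toProd.2).1 (hdartG' d2 hd2)
        rw [hd2'] at hG2
        refine hG2.2 ?_
        show s(y, x) = s(a, b)
        rw [hy1, hx1]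
    · rcases h2 with ⟨hy2, hx2⟩ | ⟨d2, hd2, hd2'⟩
      · have hG1 := (hG'adj d1.toProd.1 d1.toProd.2).1 (hdartG' d1 hd1)
        rw [hd1'] at hG1
        refine hG1.2 ?_
        show s(x, y) = s(a, b)
        rw [hx2, hy2]
      · have hed : d1.edge = d2.edge := by
          rw [SimpleGraph.Dart.edge, SimpleGraph.Dart.edge, hd1', hd2']
          exact Sym2.eq_swap
        have hnd : (q.darts.map SimpleGraph.Dart.edge).Nodup :=
          SimpleGraph.Walk.edges_nodup_of_support_nodup hqnd
        have hdd : d1 = d2 := List.inj_on_of_nodup_map hnd hd1 hd2 hed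
        rw [hdd, hd2'] at hd1'
        simp only [Prod.mk.injEq] at hd1'
        exact hxy.ne hd1'.2
  -- the new orientation
  set o' : SGOrientation G :=
    { adj := fun x y => Fwd x y ∨ (o.adj x y ∧ ¬(Fwd x y ∨ Fwd y x))
      adj_sub := by
        rintro x y (h | h)
        · rcases h with ⟨rfl, rfl⟩ | ⟨d, hd, hd'⟩
          · exact hab.symm
          · have := hG'le (hdartG' d hd)
            rwa [hd'] at this
        · exact o.adj_sub h.1
      exactly_one := by
        intro x y h
        have h1 := o.exactly_one h
        have h2 := hnoconf x y h
        constructor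
        · rintro (hf | ⟨ho1, hrel⟩)
          · rintro (hf' | ⟨-, hrel'⟩)
            · exact h2 hf hf'
            · exact hrel' (Or.inr hf)
          · rintro (hf' | ⟨ho2, -⟩)
            · exact hrel (Or.inr hf')
            · exact (h1.mp ho1) ho2
        · intro hn
          by_cases hf : Fwd x y
          · exact Or.inl hf
          · by_cases hf' : Fwd y x
            · exact absurd (Or.inl hf') hn
            · have ho2 : ¬ o.adj y x := fun ho2 =>
                hn (Or.inr ⟨ho2, fun hr => hr.elim hf' hf⟩)
              exact Or.inr ⟨h1.mpr ho2, fun hr => hr.elim hf hf'⟩ } with ho'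
  have ho'adj : ∀ x y, o'.adj x y ↔ (Fwd x y ∨ (o.adj x y ∧ ¬(Fwd x y ∨ Fwd y x))) :=
    fun _ _ => Iff.rfl
  -- key facts
  have hK1 : ∀ u v, u ∈ S → v ∈ S → o.adj u v → o'.adj u v := by
    intro u v hu hv huv
    have hnf : ∀ w z, Fwd w z → w ∉ S ∨ z ∉ S := by
      intro w z hfwd
      rcases hfwd with ⟨rfl, rfl⟩ | ⟨d, hd, hd'⟩
      · exact Or.inr ha
      · have := dart_fst_mem_dropLast q d hd
        rw [hd'] at this
        exact Or.inl (hqint w this)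
    exact Or.inr ⟨huv, fun hrel => by
      rcases hrel with hrel | hrel
      · rcases hnf u v hrel with h | h
        · exact h hu
        · exact h hv
      · rcases hnf v u hrel with h | h
        · exact h hv
        · exact h hu⟩
  have hK2 : ∀ d ∈ q.darts, o'.adj d.toProd.1 d.toProd.2 := by
    intro d hd
    exact Or.inl (Or.inr ⟨d, hd, rfl⟩)
  have hK3 : o'.adj b a := Or.inl (Or.inl ⟨rfl, rfl⟩)
  refine ⟨o', q.support, ?_, ?_⟩
  · -- OKo o' (S ∪ ↑q.support)
    set T : Set V := S ∪ {v | v ∈ q.support} with hT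
    have hST : S ⊆ T := Set.subset_union_left
    have hqT : ∀ v ∈ q.support, v ∈ T := fun v hv => Or.inr hv
    -- walk from any vertex of q.support to c
    have W1 : ∀ x ∈ q.support, ∃ w : o'.toMixed.Walk x c, ∀ v ∈ w.support, v ∈ T := by
      intro x hx
      obtain ⟨w, hw⟩ := walk_of_darts (q.dropUntil x hx)
        (fun d hd => hK2 d (q.darts_dropUntil_subset hx hd))
      exact ⟨w, fun v hv => hqT v (q.support_dropUntil_subset hx (hw v hv))⟩
    -- walk from a to any vertex of q.support
    have W2 : ∀ y ∈ q.support, ∃ w : o'.toMixed.Walk a y, ∀ v ∈ w.support, v ∈ T := by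
      intro y hy
      obtain ⟨w, hw⟩ := walk_of_darts (q.takeUntil y hy)
        (fun d hd => hK2 d (q.darts_takeUntil_subset hy hd))
      exact ⟨w, fun v hv => hqT v (q.support_takeUntil_subset hy (hw v hv))⟩
    -- walks within S transfer
    have W3 : ∀ x ∈ S, ∀ y ∈ S, ∃ w : o'.toMixed.Walk x y, ∀ v ∈ w.support, v ∈ S := by
      intro x hx y hy
      obtain ⟨w, hw⟩ := hok x hx y hy
      exact transfer_walk S hK1 w hw
    -- walk from S to any vertex of q.support: S → b → a → y
    have W4 : ∀ x ∈ S, ∀ y ∈ q.support, ∃ w : o'.toMixed.Walk x y,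
        ∀ v ∈ w.support, v ∈ T := by
      intro x hx y hy
      obtain ⟨w1, hw1⟩ := W3 x hx b hb
      obtain ⟨w2, hw2⟩ := W2 y hy
      refine ⟨wappend w1 (wappend (stepWalk hK3) w2), ?_⟩
      intro v hv
      rcases mem_support_wappend _ _ hv with hv | hv
      · exact hST (hw1 v hv)
      rcases mem_support_wappend _ _ hv with hv | hv
      · rcases mem_support_stepWalk hK3 hv with hv' | hv'
        · rw [hv']; exact hST hb
        · rw [hv']; exact hqT a (q.start_mem_support)
      · exact hw2 v hv
    have haq : a ∈ q.support := q.start_mem_support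
    intro x hx y hy
    rcases hx with hx | hx <;> rcases hy with hy | hy
    · obtain ⟨w, hw⟩ := W3 x hx y hy
      exact ⟨w, fun v hv => hST (hw v hv)⟩
    · exact W4 x hx y hy
    · -- x ∈ q.support, y ∈ S : x → c, c → y
      obtain ⟨w1, hw1⟩ := W1 x hx
      obtain ⟨w2, hw2⟩ := W3 c hc y hy
      refine ⟨wappend w1 w2, ?_⟩
      intro v hv
      rcases mem_support_wappend _ _ hv with hv | hv
      · exact hw1 v hv
      · exact hST (hw2 v hv)
    · -- both in q.support : x → c, c → y (via W4 from c ∈ S)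
      obtain ⟨w1, hw1⟩ := W1 x hx
      obtain ⟨w2, hw2⟩ := W4 c hc y hy
      refine ⟨wappend w1 w2, ?_⟩
      intro v hv
      rcases mem_support_wappend _ _ hv with hv | hv
      · exact hw1 v hv
      · exact hw2 v hv
  · exact q.start_mem_support

/-- Some orientation always exists. -/
theorem exists_orientation {V : Type} [Fintype V] (G : SimpleGraph V) :
    Nonempty (SGOrientation G) := by
  classical
  let f := Fintype.equivFin V
  refine ⟨{ adj := fun x y => G.Adj x y ∧ f x < f y
            adj_sub := fun x y h => h.1
            exactly_one := ?_ }⟩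
  intro x y h
  have hne : f x ≠ f y := fun he => h.ne (f.injective he)
  rcases lt_or_gt_of_ne hne with hlt | hlt
  · constructor
    · rintro ⟨-, h1⟩ ⟨-, h2⟩
      exact absurd (h1.trans h2) (lt_irrefl _)
    · exact fun _ => ⟨h, hlt⟩
  · constructor
    · rintro ⟨-, h1⟩
      exact absurd (h1.trans hlt) (lt_irrefl _)
    · intro hn
      exact absurd ⟨h.symm, hlt⟩ hn

/-- Growing the strongly oriented region. -/
theorem grow {V : Type} [Fintype V] {G : SimpleGraph V} (hconn : G.Connected)
    (hbl : ∀ e ∈ G.edgeSet, ¬ G.IsBridge e) :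
    ∀ (n : ℕ) (S : Finset V), (Finset.univ \ S).card ≤ n → S.Nonempty →
      (∃ o : SGOrientation G, OKo o ↑S) →
      ∃ o : SGOrientation G, o.toMixed.StronglyConnected := by
  classical
  intro n
  induction n with
  | zero =>
    intro S hcard _ ⟨o, hok⟩
    have huniv : ∀ v : V, v ∈ S := by
      intro v
      by_contra hv
      have : v ∈ Finset.univ \ S := by simp [hv]
      have := Finset.card_pos.mpr ⟨v, this⟩
      omega
    refine ⟨o, fun x y => ?_⟩
    obtain ⟨w, -⟩ := hok x (huniv x) y (huniv y)
    exact ⟨w⟩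
  | succ n ih =>
    intro S hcard hne ⟨o, hok⟩
    by_cases huniv : ∀ v : V, v ∈ S
    · refine ⟨o, fun x y => ?_⟩
      obtain ⟨w, -⟩ := hok x (huniv x) y (huniv y)
      exact ⟨w⟩
    · push_neg at huniv
      obtain ⟨v, hv⟩ := huniv
      obtain ⟨s, hs⟩ := hne
      obtain ⟨wvs⟩ := hconn.preconnected v s
      obtain ⟨a, b, ha, hb, hab⟩ :=
        exists_crossing_adj (↑S : Set V) wvs (by simpa using hv) (by simpa using hs)
      obtain ⟨o', L, hok', haL⟩ := step_lemma hbl hok ha hb hab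
      set T : Finset V := S ∪ L.toFinset with hT
      have hTcoe : (↑T : Set V) = (↑S : Set V) ∪ {u | u ∈ L} := by
        simp [hT, Finset.coe_union, Set.ext_iff]
      refine ih T ?_ ⟨s, Finset.mem_union_left _ hs⟩ ⟨o', by rw [hTcoe]; exact hok'⟩
      have hsub : Finset.univ \ T ⊂ Finset.univ \ S := by
        constructor
        · apply Finset.sdiff_subset_sdiff (le_refl _)
          exact Finset.subset_union_left
        · intro hcon
          have haT : a ∈ T := Finset.mem_union_right _ (List.mem_toFinset.mpr haL)
          have h1 : a ∈ Finset.univ \ S := by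
            simp only [Finset.mem_sdiff, Finset.mem_univ, true_and]
            simpa using ha
          have h2 := hcon h1
          simp only [Finset.mem_sdiff] at h2
          exact h2.2 haT
      have := Finset.card_lt_card hsub
      omega

end RobbinsAux

/-- Robbins: a connected undirected graph admits a strongly
connected orientation if and only if it has no bridge. -/
theorem robbins {V : Type} [Fintype V] (G : SimpleGraph V)
    (hconn : G.Connected) :
    (∃ o : SGOrientation G, o.toMixed.StronglyConnected) ↔
      ∀ e ∈ G.edgeSet, ¬ G.IsBridge e := by
  classical
  constructor
  · rintro ⟨o, hsc⟩ e he hbridge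
    induction e using Sym2.ind with
    | _ x y =>
      have hadj : G.Adj x y := G.mem_edgeSet.mp he
      rw [SimpleGraph.isBridge_iff] at hbridge
      set G' : SimpleGraph V := G \ SimpleGraph.fromEdgeSet {s(x, y)} with hG'
      have hG'adj : ∀ u v, G'.Adj u v ↔ G.Adj u v ∧ s(u, v) ≠ s(x, y) := by
        intro u v
        rw [hG', SimpleGraph.sdiff_adj, SimpleGraph.fromEdgeSet_adj]
        constructor
        · rintro ⟨h1, h2⟩
          exact ⟨h1, fun hee => h2 ⟨by simp [hee], h1.ne⟩⟩
        · rintro ⟨h1, h2⟩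
          exact ⟨h1, fun hc => h2 (by simpa using hc.1)⟩
      set R : Set V := {u | G'.Reachable x u} with hR
      have hxR : x ∈ R := Set.mem_setOf.mpr (SimpleGraph.Reachable.refl x)
      have hyR : y ∉ R := hbridge
      -- arcs not on the deleted edge cannot cross R
      have hstay : ∀ p q, o.adj p q → s(p, q) ≠ s(x, y) → (p ∈ R ↔ q ∈ R) := by
        intro p q hpq hne
        have hG'pq : G'.Adj p q := (hG'adj p q).mpr ⟨o.adj_sub hpq, hne⟩
        exact ⟨fun hp => hp.trans hG'pq.reachable,
          fun hq => hq.trans hG'pq.symm.reachable⟩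
      obtain ⟨w1⟩ := hsc x y
      obtain ⟨w2⟩ := hsc y x
      -- crossing arc along w1 : escapes R
      obtain ⟨p, q, hp, hq, hpq⟩ :=
        RobbinsAux.exists_crossing_arc (fun u => u ∉ R) w1 (by simpa using hxR) hyR
      rw [not_not] at hp
      have h1 : s(p, q) = s(x, y) := by
        by_contra hne
        exact hq ((hstay p q hpq hne).1 hp)
      have hoxy : o.adj x y := by
        rcases Sym2.eq_iff.mp h1 with ⟨rfl, rfl⟩ | ⟨rfl, rfl⟩
        · exact hpq
        · exact absurd hxR hq
      -- crossing arc along w2 : enters R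
      obtain ⟨p', q', hp', hq', hpq'⟩ :=
        RobbinsAux.exists_crossing_arc (fun u => u ∈ R) w2 hyR hxR
      have h2 : s(p', q') = s(x, y) := by
        by_contra hne
        exact hp' ((hstay p' q' hpq' hne).2 hq')
      have hoyx : o.adj y x := by
        rcases Sym2.eq_iff.mp h2 with ⟨rfl, rfl⟩ | ⟨rfl, rfl⟩
        · exact absurd hq' hyR
        · exact hpq'
      exact ((o.exactly_one hadj).mp hoxy) hoyx
  · intro hbl
    have : Nonempty V := hconn.nonempty
    obtain ⟨v⟩ := this
    obtain ⟨o0⟩ := RobbinsAux.exists_orientation G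
    refine RobbinsAux.grow hconn hbl (Finset.univ \ {v}).card {v} (le_refl _)
      ⟨v, Finset.mem_singleton_self v⟩ ⟨o0, ?_⟩
    intro x hx y hy
    simp only [Finset.coe_singleton, Set.mem_singleton_iff] at hx hy
    subst hx; subst hy
    refine ⟨.nil _, ?_⟩
    intro u hu
    simp only [MixedMultigraph.Walk.support, List.mem_singleton] at hu
    simp [hu]
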